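/- There exist a real constant K > 1 and a natural number T4 such that for all integers s > t > T4 with s − t > K one has C(s,t) ≤ 0. -/

import Mathlib

open Finset MeasureTheory ProbabilityTheory

/-- `Cst r s t` is the covariance `cov(S_s - S_t, S_t)` of the partial-sum process
of a centered stationary sequence with covariance function `r`. -/
noncomputable def Cst (r : ℤ → ℝ) (s t : ℕ) : ℝ :=
  ∑ i ∈ Finset.Icc (t + 1) s, ∑ j ∈ Finset.Icc 1 t, r ((i : ℤ) - (j : ℤ))

open Filter in
theorem harmonicIccTendsto (T0 : ℕ) (hT0 : 1 ≤ T0) :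
    Tendsto (fun N => ∑ u ∈ Finset.Icc T0 N, (1/(u:ℝ))) atTop atTop := by
  have h0 : Tendsto (fun n => ∑ i ∈ Finset.range n, (1 / (i + 1) : ℝ)) atTop atTop :=
    Real.tendsto_sum_range_one_div_nat_succ_atTop
  have heq : ∀ n : ℕ, ∑ i ∈ Finset.range n, (1 / (i + 1) : ℝ)
      = ∑ u ∈ Finset.Ioc 0 n, (1/(u:ℝ)) := by
    intro n
    rw [← Finset.Icc_add_one_left_eq_Ioc, ← Finset.Ico_add_one_right_eq_Icc, Finset.sum_Ico_eq_sum_range]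
    simp [add_comm]
  have h1 : Tendsto (fun n : ℕ => ∑ u ∈ Finset.Ioc 0 n, (1/(u:ℝ))) atTop atTop := h0.congr heq
  have h2 := tendsto_atTop_add_const_right atTop (-∑ u ∈ Finset.Ioc 0 (T0-1), (1/(u:ℝ))) h1
  apply h2.congr'
  filter_upwards [eventually_ge_atTop (T0-1)] with N hN
  have := Finset.sum_Ioc_consecutive (fun u => (1/(u:ℝ))) (Nat.zero_le (T0-1)) hN
  have hIcc : Finset.Icc T0 N = Finset.Ioc (T0-1) N := by
    rw [← Finset.Icc_add_one_left_eq_Ioc]; congr 1; omega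
  rw [hIcc]; linarith

open Filter in
theorem covariance_nonpos
    (r : ℤ → ℝ) (hEven : ∀ t : ℤ, r (-t) = r t)
    (hAbsSum : Summable fun t : ℤ => |r t|)
    (hSumZero : ∑' t : ℤ, r t = 0)
    (T0 : ℕ) (hT0 : 2 ≤ T0)
    (J1 J2 χ : ℝ) (hJ12 : J1 ≤ J2) (hJ2 : J2 < 0)
    (hχ : χ ∈ Set.Ioo (-2 : ℝ) (-1))
    (hbound : ∀ t : ℤ, (T0 : ℤ) ≤ t →
      J1 * (t : ℝ) ^ χ ≤ r t ∧ r t ≤ J2 * (t : ℝ) ^ χ)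
    (H : ℝ) (hH : H = χ / 2 + 1) :
    ∃ (K : ℝ), 1 < K ∧ ∃ (T4 : ℕ),
      ∀ s t : ℕ, T4 < t → t < s → K < (s : ℝ) - (t : ℝ) → Cst r s t ≤ 0 := by
  obtain ⟨hχ1, hχ2⟩ := hχ
  -- facts about r at positive naturals
  have hr_le : ∀ k : ℕ, T0 ≤ k → r (k:ℤ) ≤ J2 * (k:ℝ) ^ χ := by
    intro k hk
    have h := (hbound (k:ℤ) (by exact_mod_cast hk)).2
    push_cast at h
    exact h
  have hr_nonpos : ∀ k : ℕ, T0 ≤ k → r (k:ℤ) ≤ 0 := by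
    intro k hk
    refine (hr_le k hk).trans ?_
    exact mul_nonpos_of_nonpos_of_nonneg hJ2.le (Real.rpow_nonneg (Nat.cast_nonneg k) χ)
  set A0 : ℝ := ∑ k ∈ Finset.Icc 1 (T0-1), |r (k:ℤ)| with hA0def
  have hA0 : 0 ≤ A0 := Finset.sum_nonneg fun _ _ => abs_nonneg _
  set c : ℝ := J2 * (2:ℝ) ^ χ with hcdef
  have hcneg : c < 0 := mul_neg_of_neg_of_pos hJ2 (Real.rpow_pos_of_pos two_pos χ)
  -- choose N
  have hdiv := harmonicIccTendsto T0 (by omega)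
  obtain ⟨N, hNsum, hNge⟩ :=
    ((tendsto_atTop.mp hdiv (((T0-1:ℕ):ℝ) * A0 / (-c))).and
      (eventually_ge_atTop (max T0 2))).exists
  have hT0N : T0 ≤ N := le_trans (le_max_left _ _) hNge
  have hN2 : 2 ≤ N := le_trans (le_max_right _ _) hNge
  have hNbound : ((T0-1:ℕ):ℝ) * A0 + c * ∑ u ∈ Finset.Icc T0 N, (1/(u:ℝ)) ≤ 0 := by
    rw [div_le_iff₀ (by linarith : (0:ℝ) < -c)] at hNsum
    nlinarith [hNsum]
  refine ⟨(N:ℝ), by exact_mod_cast (show 1 < N by omega), N, ?_⟩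
  intro s t hT4t hts hK
  have hNst : N < s - t := by
    have h : (N:ℝ) < ((s - t : ℕ) : ℝ) := by
      rw [Nat.cast_sub hts.le]; exact hK
    exact_mod_cast h
  have hstN : t + N + 1 ≤ s := by omega
  set g : ℕ → ℝ := fun i => ∑ j ∈ Finset.Icc 1 t, r ((i:ℤ) - (j:ℤ)) with hgdef
  -- terms far from t are nonpositive
  have hg_nonpos : ∀ i : ℕ, t + T0 ≤ i → g i ≤ 0 := by
    intro i hi
    apply Finset.sum_nonpos
    intro j hj
    rw [Finset.mem_Icc] at hj
    rw [show (i:ℤ) - (j:ℤ) = ((i - j : ℕ):ℤ) by omega]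
    exact hr_nonpos _ (by omega)
  -- terms near t are at most A0
  have hg_small : ∀ i : ℕ, t < i → g i ≤ A0 := by
    intro i hti
    set S := Finset.Icc (max 1 (i+1-T0)) t with hSdef
    have hSsub : S ⊆ Finset.Icc 1 t := Finset.Icc_subset_Icc (le_max_left _ _) le_rfl
    have hsplit : (∑ j ∈ Finset.Icc 1 t \ S, r ((i:ℤ)-(j:ℤ))) + ∑ j ∈ S, r ((i:ℤ)-(j:ℤ))
        = ∑ j ∈ Finset.Icc 1 t, r ((i:ℤ)-(j:ℤ)) := Finset.sum_sdiff hSsub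
    have hdiff : ∑ j ∈ Finset.Icc 1 t \ S, r ((i:ℤ)-(j:ℤ)) ≤ 0 := by
      apply Finset.sum_nonpos
      intro j hj
      rw [Finset.mem_sdiff, Finset.mem_Icc, hSdef, Finset.mem_Icc] at hj
      rw [show (i:ℤ) - (j:ℤ) = ((i - j : ℕ):ℤ) by omega]
      exact hr_nonpos _ (by omega)
    have h2 : ∑ j ∈ S, r ((i:ℤ)-(j:ℤ)) ≤ A0 := by
      have hstep : ∑ j ∈ S, r ((i:ℤ)-(j:ℤ)) ≤ ∑ j ∈ S, |r (((i-j:ℕ)):ℤ)| := by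
        apply Finset.sum_le_sum
        intro j hj
        rw [hSdef, Finset.mem_Icc] at hj
        rw [show (i:ℤ) - (j:ℤ) = ((i - j : ℕ):ℤ) by omega]
        exact le_abs_self _
      have himg : ∑ j ∈ S, |r (((i-j:ℕ)):ℤ)|
          = ∑ k ∈ S.image (fun j => i - j), |r ((k:ℕ):ℤ)| := by
        rw [Finset.sum_image]
        intro a ha b hb hab
        rw [hSdef, Finset.mem_coe, Finset.mem_Icc] at ha hb
        dsimp only at hab
        omega
      have hsub2 : ∑ k ∈ S.image (fun j => i - j), |r ((k:ℕ):ℤ)| ≤ A0 := by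
        apply Finset.sum_le_sum_of_subset_of_nonneg
        · intro k hk
          rw [Finset.mem_image] at hk
          obtain ⟨j, hj, rfl⟩ := hk
          rw [hSdef, Finset.mem_Icc] at hj
          rw [Finset.mem_Icc]
          omega
        · intros
          exact abs_nonneg _
      linarith
    have hgi : g i = (∑ j ∈ Finset.Icc 1 t \ S, r ((i:ℤ)-(j:ℤ))) + ∑ j ∈ S, r ((i:ℤ)-(j:ℤ)) := by
      rw [hsplit]
    linarith
  -- middle-range terms are quantitatively negative
  have hg_mid : ∀ u : ℕ, T0 ≤ u → u ≤ N → g (t + u) ≤ c * (1/(u:ℝ)) := by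
    intro u hu1 hu2
    have hut : u ≤ t := by omega
    set i := t + u with hidef
    set S := Finset.Icc (t+1-u) t with hSdef
    have hSsub : S ⊆ Finset.Icc 1 t := Finset.Icc_subset_Icc (by omega) le_rfl
    have hsplit : (∑ j ∈ Finset.Icc 1 t \ S, r ((i:ℤ)-(j:ℤ))) + ∑ j ∈ S, r ((i:ℤ)-(j:ℤ))
        = ∑ j ∈ Finset.Icc 1 t, r ((i:ℤ)-(j:ℤ)) := Finset.sum_sdiff hSsub
    have hdiff : ∑ j ∈ Finset.Icc 1 t \ S, r ((i:ℤ)-(j:ℤ)) ≤ 0 := by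
      apply Finset.sum_nonpos
      intro j hj
      rw [Finset.mem_sdiff, Finset.mem_Icc] at hj
      rw [show (i:ℤ) - (j:ℤ) = ((i - j : ℕ):ℤ) by omega]
      exact hr_nonpos _ (by omega)
    have hx : (0:ℝ) < (u:ℝ) := by exact_mod_cast (by omega : 0 < u)
    have hb : ∀ j ∈ S, r ((i:ℤ)-(j:ℤ)) ≤ J2 * ((2*u:ℕ):ℝ)^χ := by
      intro j hj
      rw [hSdef, Finset.mem_Icc] at hj
      rw [show (i:ℤ) - (j:ℤ) = ((i - j : ℕ):ℤ) by omega]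
      refine (hr_le _ (by omega)).trans ?_
      have hk2u : ((i-j:ℕ):ℝ) ≤ ((2*u:ℕ):ℝ) := by exact_mod_cast (show i - j ≤ 2*u by omega)
      have hkpos : (0:ℝ) < ((i-j:ℕ):ℝ) := by exact_mod_cast (show 0 < i - j by omega)
      exact mul_le_mul_of_nonpos_left
        (Real.rpow_le_rpow_of_nonpos hkpos hk2u (by linarith)) hJ2.le
    have h2 : ∑ j ∈ S, r ((i:ℤ)-(j:ℤ)) ≤ (u:ℝ) * (J2 * ((2*u:ℕ):ℝ)^χ) := by
      calc ∑ j ∈ S, r ((i:ℤ)-(j:ℤ)) ≤ ∑ _j ∈ S, J2 * ((2*u:ℕ):ℝ)^χ := Finset.sum_le_sum hb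
        _ = (S.card : ℝ) * (J2 * ((2*u:ℕ):ℝ)^χ) := by rw [Finset.sum_const, nsmul_eq_mul]
        _ = (u:ℝ) * (J2 * ((2*u:ℕ):ℝ)^χ) := by
            rw [hSdef, Nat.card_Icc, show t + 1 - (t+1-u) = u by omega]
    have harith : (u:ℝ) * (J2 * ((2*u:ℕ):ℝ)^χ) ≤ c * (1/(u:ℝ)) := by
      have hcast2 : ((2*u:ℕ):ℝ) = 2 * (u:ℝ) := by push_cast; ring
      have hmul : (2 * (u:ℝ))^χ = (2:ℝ)^χ * (u:ℝ)^χ :=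
        Real.mul_rpow (by norm_num) hx.le
      have hpow : (u:ℝ)^(χ+1) = (u:ℝ)^χ * (u:ℝ) := Real.rpow_add_one hx.ne' χ
      have hexp : (u:ℝ)^(-1:ℝ) ≤ (u:ℝ)^(χ+1) := by
        apply Real.rpow_le_rpow_of_exponent_le
        · exact_mod_cast (by omega : 1 ≤ u)
        · linarith
      have hinv : (u:ℝ)^(-1:ℝ) = 1/(u:ℝ) := by
        rw [Real.rpow_neg_one, one_div]
      have := mul_le_mul_of_nonpos_left hexp (le_of_lt hcneg)
      calc (u:ℝ) * (J2 * ((2*u:ℕ):ℝ)^χ)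
          = c * (u:ℝ)^(χ+1) := by rw [hcast2, hmul, hpow, hcdef]; ring
        _ ≤ c * (u:ℝ)^(-1:ℝ) := this
        _ = c * (1/(u:ℝ)) := by rw [hinv]
    have hgi : g i = (∑ j ∈ Finset.Icc 1 t \ S, r ((i:ℤ)-(j:ℤ))) + ∑ j ∈ S, r ((i:ℤ)-(j:ℤ)) := by
      rw [hsplit]
    linarith
  -- assemble
  have hCst : Cst r s t = ∑ i ∈ Finset.Ioc t s, g i := by
    rw [Cst, ← Finset.Icc_add_one_left_eq_Ioc]
  have e1 := Finset.sum_Ioc_consecutive g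
    (show t ≤ t + (T0-1) by omega) (show t+(T0-1) ≤ t+N by omega)
  have e2 := Finset.sum_Ioc_consecutive g
    (show t ≤ t + N by omega) (show t + N ≤ s by omega)
  have bound1 : ∑ i ∈ Finset.Ioc t (t+(T0-1)), g i ≤ ((T0-1:ℕ):ℝ) * A0 := by
    have h := Finset.sum_le_card_nsmul (Finset.Ioc t (t+(T0-1))) g A0
      (fun i hi => hg_small i (Finset.mem_Ioc.mp hi).1)
    rwa [Nat.card_Ioc, show t + (T0-1) - t = T0 - 1 by omega, nsmul_eq_mul] at h
  have bound2 : ∑ i ∈ Finset.Ioc (t+(T0-1)) (t+N), g i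
      ≤ c * ∑ u ∈ Finset.Icc T0 N, (1/(u:ℝ)) := by
    rw [show Finset.Ioc (t+(T0-1)) (t+N)
        = (Finset.Ioc (T0-1) N).map (addLeftEmbedding t) from
        (Finset.map_add_left_Ioc _ _ _).symm, Finset.sum_map, Finset.mul_sum,
      show Finset.Icc T0 N = Finset.Ioc (T0-1) N by rw [← Finset.Icc_add_one_left_eq_Ioc]; congr 1; omega]
    apply Finset.sum_le_sum
    intro u hu
    rw [Finset.mem_Ioc] at hu
    simpa [addLeftEmbedding] using hg_mid u (by omega) hu.2
  have bound3 : ∑ i ∈ Finset.Ioc (t+N) s, g i ≤ 0 := by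
    apply Finset.sum_nonpos
    intro i hi
    rw [Finset.mem_Ioc] at hi
    exact hg_nonpos i (by omega)
  rw [hCst, ← e2, ← e1]
  linarith
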